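/- Let F be a non-abelian free group, Δ a decomposition of F, φ a Δ-decomposable quasimorphism, ω a bounded symmetric Δ-continuous 2-cocycle, and ζ(g,g',h) = Σ_{j=1}^k φ(g_j)·ω(g_{j+1}⋯g_k g', h) for Δ(g) = (g₁,…,g_k). Then there is a constant C > 0 such that for all u, v₁, v₂ ∈ F with v₁uv₂ reduced: (a) |ζ(u, u⁻¹v₁⁻¹, v₁uv₂) − ζ(u, u⁻¹, u)| ≤ C, and (b) |ζ(u⁻¹, v₁⁻¹, v₁uv₂) − ζ(u⁻¹, 1, u)| ≤ C. -/

import Mathlib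

/-! Common definitions: free groups, reduced products, (bounded) cochains,
decompositions of a free group, Brooks and Rolli quasimorphisms. -/

section Preamble

variable {α : Type} [DecidableEq α]

/-- Word length of an element of a free group (length of its reduced word). -/
def wlen (g : FreeGroup α) : ℕ := g.toWord.length

/-- A product `g = g₁ ⋯ g_k` is reduced (no cancellation) if the word lengths add up. -/
def ReducedProd (l : List (FreeGroup α)) : Prop :=
  wlen l.prod = (l.map wlen).sum

/-- Inhomogeneous coboundary `δ¹φ(g,h) = φ(g) + φ(h) − φ(gh)`. -/
def d1 (φ : FreeGroup α → ℝ) (g h : FreeGroup α) : ℝ := φ g + φ h - φ (g * h)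

/-- Inhomogeneous coboundary `δ²η`. -/
def d2 (η : FreeGroup α → FreeGroup α → ℝ) (g h i : FreeGroup α) : ℝ :=
  η h i - η (g * h) i + η g (h * i) - η g h

/-- Inhomogeneous coboundary `δ³β`. -/
def d3 (β : FreeGroup α → FreeGroup α → FreeGroup α → ℝ) (g h i j : FreeGroup α) : ℝ :=
  β h i j - β (g * h) i j + β g (h * i) j - β g h (i * j) + β g h i

/-- A quasimorphism on the free group. -/
def IsQuasimorphism (φ : FreeGroup α → ℝ) : Prop :=
  ∃ D > (0 : ℝ), ∀ g h : FreeGroup α, |d1 φ g h| < D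

/-- A symmetric map: `φ(g⁻¹) = −φ(g)`. -/
def IsSymmetricMap (φ : FreeGroup α → ℝ) : Prop :=
  ∀ g : FreeGroup α, φ g⁻¹ = -φ g

/-- Longest common initial sequence of two lists. -/
def commonPrefix {β : Type} [DecidableEq β] : List β → List β → List β
  | a :: as, b :: bs => if a = b then a :: commonPrefix as bs else []
  | _, _ => []

/-- Reversed, entrywise-inverted list: `(g₁, …, g_k) ↦ (g_k⁻¹, …, g₁⁻¹)`. -/
def seqInv (l : List (FreeGroup α)) : List (FreeGroup α) :=
  (l.map fun x => x⁻¹).reverse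

/-- `(c̲₁⁻¹)`: the common initial sequence of `Δ(g)` and `Δ(gh)`. -/
def cSeq1 (D : FreeGroup α → List (FreeGroup α)) (g h : FreeGroup α) : List (FreeGroup α) :=
  commonPrefix (D g) (D (g * h))

/-- `(c̲₂⁻¹)`: the common initial sequence of `Δ(g⁻¹)` and `Δ(h)`. -/
def cSeq2 (D : FreeGroup α → List (FreeGroup α)) (g h : FreeGroup α) : List (FreeGroup α) :=
  commonPrefix (D g⁻¹) (D h)

/-- `(c̲₃⁻¹)`: the common initial sequence of `Δ(h⁻¹)` and `Δ(h⁻¹g⁻¹)`. -/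
def cSeq3 (D : FreeGroup α → List (FreeGroup α)) (g h : FreeGroup α) : List (FreeGroup α) :=
  commonPrefix (D h⁻¹) (D (h⁻¹ * g⁻¹))

/-- `(r̲₁)`: middle part of `Δ(g) = (c̲₁⁻¹)·(r̲₁)·(c̲₂)`. -/
def rSeq1 (D : FreeGroup α → List (FreeGroup α)) (g h : FreeGroup α) : List (FreeGroup α) :=
  ((D g).drop (cSeq1 D g h).length).take
    ((D g).length - (cSeq1 D g h).length - (cSeq2 D g h).length)

/-- `(r̲₂)`: middle part of `Δ(h) = (c̲₂⁻¹)·(r̲₂)·(c̲₃)`. -/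
def rSeq2 (D : FreeGroup α → List (FreeGroup α)) (g h : FreeGroup α) : List (FreeGroup α) :=
  ((D h).drop (cSeq2 D g h).length).take
    ((D h).length - (cSeq2 D g h).length - (cSeq3 D g h).length)

/-- `(r̲₃)`: middle part of `Δ(h⁻¹g⁻¹) = (c̲₃⁻¹)·(r̲₃)·(c̲₁)`. -/
def rSeq3 (D : FreeGroup α → List (FreeGroup α)) (g h : FreeGroup α) : List (FreeGroup α) :=
  ((D (h⁻¹ * g⁻¹)).drop (cSeq3 D g h).length).take
    ((D (h⁻¹ * g⁻¹)).length - (cSeq3 D g h).length - (cSeq1 D g h).length)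

/-- A decomposition `Δ` of the free group `F` into pieces `P` (Definition 3.1). -/
structure Decomp (α : Type) [DecidableEq α] where
  /-- the set of pieces -/
  pieces : Set (FreeGroup α)
  /-- the decomposition map `Δ` -/
  D : FreeGroup α → List (FreeGroup α)
  /-- the uniform bound `R` on the r-parts of `Δ`-triangles -/
  R : ℕ
  R_pos : 0 < R
  pieces_symm : ∀ p ∈ pieces, p⁻¹ ∈ pieces
  one_notin_pieces : (1 : FreeGroup α) ∉ pieces
  mem_pieces : ∀ g : FreeGroup α, ∀ p ∈ D g, p ∈ pieces
  prod_eq : ∀ g : FreeGroup α, (D g).prod = g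
  reduced : ∀ g : FreeGroup α, ReducedProd (D g)
  inv_eq : ∀ g : FreeGroup α, D g⁻¹ = seqInv (D g)
  infix_closed : ∀ (g : FreeGroup α) (l₁ l₂ l₃ : List (FreeGroup α)),
    D g = l₁ ++ l₂ ++ l₃ → D l₂.prod = l₂
  triangle₁ : ∀ g h : FreeGroup α, D g = cSeq1 D g h ++ rSeq1 D g h ++ seqInv (cSeq2 D g h)
  triangle₂ : ∀ g h : FreeGroup α, D h = cSeq2 D g h ++ rSeq2 D g h ++ seqInv (cSeq3 D g h)
  triangle₃ : ∀ g h : FreeGroup α,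
    D (h⁻¹ * g⁻¹) = cSeq3 D g h ++ rSeq3 D g h ++ seqInv (cSeq1 D g h)
  rBound₁ : ∀ g h : FreeGroup α, (rSeq1 D g h).length ≤ R
  rBound₂ : ∀ g h : FreeGroup α, (rSeq2 D g h).length ≤ R
  rBound₃ : ∀ g h : FreeGroup α, (rSeq3 D g h).length ≤ R

/-- The `Δ`-decomposable map `φ_{λ,Δ}(g) = Σ_j λ(g_j)`. -/
def decQM (D : FreeGroup α → List (FreeGroup α)) (lam : FreeGroup α → ℝ)
    (g : FreeGroup α) : ℝ :=
  ((D g).map lam).sum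

/-- `φ` is a `Δ`-decomposable quasimorphism (Definition 3.8). -/
def IsDecomposable (dec : Decomp α) (φ : FreeGroup α → ℝ) : Prop :=
  ∃ lam : FreeGroup α → ℝ,
    (∃ B : ℝ, ∀ p ∈ dec.pieces, |lam p| ≤ B) ∧
    (∀ p ∈ dec.pieces, lam p⁻¹ = -lam p) ∧
    φ = decQM dec.D lam

/-- Agreement (as an extended natural number) of two sequences:
`⊤` if they are equal, otherwise the length of their common initial sequence. -/
def seqAgree {β : Type} [DecidableEq β] (l l' : List β) : ℕ∞ :=
  if l = l' then ⊤ else ((commonPrefix l l').length : ℕ∞)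

/-- The quantity `N_Δ((g,h),(g',h'))` measuring how much the `Δ`-triangles of the two
pairs agree around their centres. -/
noncomputable def NDelta (D : FreeGroup α → List (FreeGroup α))
    (p q : FreeGroup α × FreeGroup α) : ℕ∞ :=
  if p = q then ⊤
  else if rSeq1 D p.1 p.2 = rSeq1 D q.1 q.2 ∧ rSeq2 D p.1 p.2 = rSeq2 D q.1 q.2 ∧
            rSeq3 D p.1 p.2 = rSeq3 D q.1 q.2 then
    min (seqAgree (seqInv (cSeq1 D p.1 p.2)) (seqInv (cSeq1 D q.1 q.2)))
      (min (seqAgree (seqInv (cSeq2 D p.1 p.2)) (seqInv (cSeq2 D q.1 q.2)))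
        (seqAgree (seqInv (cSeq3 D p.1 p.2)) (seqInv (cSeq3 D q.1 q.2))))
  else 0

/-- A bounded symmetric `2`-cocycle `ω` is `Δ`-continuous (Definition 3.12). -/
def DeltaContinuousCocycle (D : FreeGroup α → List (FreeGroup α))
    (ω : FreeGroup α → FreeGroup α → ℝ) : Prop :=
  ∃ s : ℕ → ℝ, (∀ j, 0 ≤ s j) ∧ Summable s ∧
    ∀ p q : FreeGroup α × FreeGroup α, p ≠ q → ∀ N : ℕ, NDelta D p q = (N : ℕ∞) →
      |ω p.1 p.2 - ω q.1 q.2| ≤ s N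

/-- A quasimorphism `ψ` is `Δ`-continuous: it is symmetric and `δ¹ψ` is `Δ`-continuous. -/
def DeltaContinuousQM (D : FreeGroup α → List (FreeGroup α)) (ψ : FreeGroup α → ℝ) : Prop :=
  IsSymmetricMap ψ ∧ IsQuasimorphism ψ ∧ DeltaContinuousCocycle D (d1 ψ)

/-- `ζ`-type sums: `zetaL A (g₁,…,g_k) g' h = Σ_j A(g_j, g_{j+1}⋯g_k·g', h)`. -/
def zetaL (A : FreeGroup α → FreeGroup α → FreeGroup α → ℝ) :
    List (FreeGroup α) → FreeGroup α → FreeGroup α → ℝ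
  | [], _, _ => 0
  | p :: rest, g', h => A p (rest.prod * g') h + zetaL A rest g' h

/-- `ζ(g,g',h) = Σ_j φ(g_j)·ω(g_{j+1}⋯g_k·g', h)` for `Δ(g) = (g₁,…,g_k)`. -/
def zetaD (D : FreeGroup α → List (FreeGroup α)) (φ : FreeGroup α → ℝ)
    (ω : FreeGroup α → FreeGroup α → ℝ) (g g' h : FreeGroup α) : ℝ :=
  zetaL (fun p u v => φ p * ω u v) (D g) g' h

/-- `w` is a subword of `g` (as reduced words). -/
def Subword (w g : FreeGroup α) : Prop :=
  w.toWord <:+: g.toWord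

/-- `w` is non self-overlapping: there are no reduced words `x, y` with `x` nontrivial
such that `w = xyx` as a reduced word. -/
def NonSelfOverlapping (w : FreeGroup α) : Prop :=
  ¬∃ x y : FreeGroup α, x ≠ 1 ∧ w = x * y * x ∧ ReducedProd [x, y, x]

/-- `ν_w(g)`: the number of occurrences of `w` as a subword of the reduced word `g`. -/
def occCount (w g : FreeGroup α) : ℕ :=
  ((List.range (g.toWord.length + 1)).filter
    (fun s => decide ((g.toWord.drop s).take w.toWord.length = w.toWord))).length

/-- The Brooks counting function `φ_w = ν_w − ν_{w⁻¹}`. -/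
noncomputable def brooksQM (w : FreeGroup α) (g : FreeGroup α) : ℝ :=
  (occCount w g : ℝ) - (occCount w⁻¹ g : ℝ)

/-- `φ` is a Brooks counting quasimorphism on some non self-overlapping word. -/
def IsBrooksQM (φ : FreeGroup α → ℝ) : Prop :=
  ∃ w : FreeGroup α, NonSelfOverlapping w ∧ φ = brooksQM w

/-- The interleaved list `(u₁, w^{ε₁}, u₂, …, u_{k−1}, w^{ε_{k−1}}, u_k)` built from
`us = (u₁,…,u_k)` and signs `eps = (ε₁,…,ε_{k−1})`. -/
def wfacList (w : FreeGroup α) : List (FreeGroup α) → List Bool → List (FreeGroup α)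
  | [], _ => []
  | [u], _ => [u]
  | u :: us, [] => u :: wfacList w us []
  | u :: us, e :: eps => u :: (if e then w else w⁻¹) :: wfacList w us eps

/-- `RolliWord l` : `l = ((n₁,m₁),…,(n_k,m_k))` encodes the normal form
`x_{n₁}^{m₁} ⋯ x_{n_k}^{m_k}` (all `m_j ≠ 0`, no consecutive equal indices). -/
def RolliWord {n : ℕ} (l : List (Fin n × ℤ)) : Prop :=
  (∀ p ∈ l, p.2 ≠ 0) ∧ l.Chain' fun p q => p.1 ≠ q.1

/-- The element `x_{n₁}^{m₁} ⋯ x_{n_k}^{m_k}` encoded by `l`. -/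
def rolliProd {n : ℕ} (l : List (Fin n × ℤ)) : FreeGroup (Fin n) :=
  (l.map fun p => FreeGroup.of p.1 ^ p.2).prod

/-- `φ` is a Rolli quasimorphism. -/
def IsRolliQM {n : ℕ} (φ : FreeGroup (Fin n) → ℝ) : Prop :=
  ∃ lam : Fin n → ℤ → ℝ,
    (∀ j, ∃ B : ℝ, ∀ m : ℤ, |lam j m| ≤ B) ∧
    (∀ j m, lam j (-m) = -lam j m) ∧
    φ 1 = 0 ∧
    ∀ l : List (Fin n × ℤ), RolliWord l → φ (rolliProd l) = (l.map fun p => lam p.1 p.2).sum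

/-- The list of letters (as group elements) of the reduced word representing `g`. -/
def letters (g : FreeGroup α) : List (FreeGroup α) :=
  g.toWord.map fun p => FreeGroup.mk [p]

/-- `d` is the common 2-path of `(g,h)`: `g = t₁⁻¹d` and `h = d⁻¹t₂` as reduced words,
with the tripod condition that `gh = t₁⁻¹t₂` is also reduced. -/
def IsCommon2Path (g h d : FreeGroup α) : Prop :=
  ∃ t₁ t₂ : FreeGroup α, g = t₁⁻¹ * d ∧ h = d⁻¹ * t₂ ∧
    ReducedProd [t₁⁻¹, d] ∧ ReducedProd [d⁻¹, t₂] ∧ ReducedProd [t₁⁻¹, t₂]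

/-- Case (a) of the alignment of `g, h, i` (Figure 4a). -/
def Align3A (g h i : FreeGroup α) : Prop :=
  ∃ t₁ t₂ t₃ t₄ t₅ : FreeGroup α,
    g = t₁ * t₂ ∧ h = t₂⁻¹ * t₃ * t₄ ∧ i = t₄⁻¹ * t₅ ∧
    ReducedProd [t₁, t₂] ∧ ReducedProd [t₂⁻¹, t₃, t₄] ∧ ReducedProd [t₄⁻¹, t₅] ∧
    ReducedProd [t₁, t₃, t₅]

/-- Case (b) of the alignment of `g, h, i` (Figure 4b). -/
def Align3B (g h i : FreeGroup α) : Prop :=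
  ∃ t₁ t₂ t₃ t₄ t₅ : FreeGroup α,
    g = t₁ * t₂ * t₃ ∧ h = t₃⁻¹ * t₄ ∧ i = t₄⁻¹ * t₂⁻¹ * t₅ ∧
    ReducedProd [t₁, t₂, t₃] ∧ ReducedProd [t₃⁻¹, t₄] ∧ ReducedProd [t₄⁻¹, t₂⁻¹, t₅] ∧
    ReducedProd [t₁, t₅]

/-- Case (c) of the alignment of `g, h, i` (Figure 4c), with common 3-path `c`. -/
def Align3C (g h i c : FreeGroup α) : Prop :=
  ∃ t₁ t₂ t₃ t₄ : FreeGroup α,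
    g = t₁⁻¹ * c * t₂ ∧ h = t₂⁻¹ * c⁻¹ * t₃ ∧ i = t₃⁻¹ * c * t₄ ∧
    ReducedProd [t₁⁻¹, c, t₂] ∧ ReducedProd [t₂⁻¹, c⁻¹, t₃] ∧ ReducedProd [t₃⁻¹, c, t₄] ∧
    ReducedProd [t₁⁻¹, t₃] ∧ ReducedProd [t₂⁻¹, t₄]

/-- `c` is the common 3-path of `(g,h,i)`: `c` in case (c), the identity otherwise. -/
def IsCommon3Path (g h i c : FreeGroup α) : Prop :=
  Align3C g h i c ∨ (c = 1 ∧ (Align3A g h i ∨ Align3B g h i))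

end Preamble

section Aux
variable {α : Type} [DecidableEq α]

lemma wlen_one : wlen (1 : FreeGroup α) = 0 := by simp [wlen, FreeGroup.toWord_one]

lemma wlen_inv (x : FreeGroup α) : wlen x⁻¹ = wlen x := by
  simp [wlen, FreeGroup.toWord_inv, FreeGroup.invRev_length]

lemma wlen_eq_zero {x : FreeGroup α} : wlen x = 0 ↔ x = 1 := by
  simp [wlen, List.length_eq_zero_iff, FreeGroup.toWord_eq_nil_iff]

lemma wlen_mul_le (x y : FreeGroup α) : wlen (x * y) ≤ wlen x + wlen y := by
  have := (FreeGroup.toWord_mul_sublist x y).length_le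
  simpa [wlen] using this

/-- `x·y` is a reduced product. -/
def Red2 (x y : FreeGroup α) : Prop := wlen (x * y) = wlen x + wlen y

lemma Red2.inv {x y : FreeGroup α} (h : Red2 x y) : Red2 y⁻¹ x⁻¹ := by
  unfold Red2 at *
  rw [← mul_inv_rev, wlen_inv, wlen_inv, wlen_inv, h, Nat.add_comm]

lemma Red2.split_right {x y₁ y₂ : FreeGroup α} (h : Red2 x (y₁ * y₂)) (h2 : Red2 y₁ y₂) :
    Red2 x y₁ ∧ Red2 (x * y₁) y₂ := by
  unfold Red2 at *
  have e1 : x * (y₁ * y₂) = (x * y₁) * y₂ := (mul_assoc x y₁ y₂).symm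
  have l1 := wlen_mul_le x y₁
  have l2 := wlen_mul_le (x * y₁) y₂
  rw [e1] at h
  omega

lemma Red2.split_left {x₁ x₂ y : FreeGroup α} (h : Red2 (x₁ * x₂) y) (h2 : Red2 x₁ x₂) :
    Red2 x₂ y ∧ Red2 x₁ (x₂ * y) := by
  unfold Red2 at *
  have e1 : (x₁ * x₂) * y = x₁ * (x₂ * y) := mul_assoc x₁ x₂ y
  have l1 := wlen_mul_le x₂ y
  have l2 := wlen_mul_le x₁ (x₂ * y)
  rw [e1] at h
  omega

lemma red2_triple {x y z : FreeGroup α} (h : wlen (x * (y * z)) = wlen x + (wlen y + wlen z)) :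
    Red2 x y ∧ Red2 y z ∧ Red2 (x * y) z ∧ Red2 x (y * z) := by
  unfold Red2
  have e' : wlen (x * (y * z)) = wlen ((x * y) * z) := by rw [mul_assoc]
  have l1 := wlen_mul_le x y
  have l2 := wlen_mul_le y z
  have l3 := wlen_mul_le (x * y) z
  have l4 := wlen_mul_le x (y * z)
  refine ⟨?_, ?_, ?_, ?_⟩ <;> omega

lemma wlen_prod_le (l : List (FreeGroup α)) : wlen l.prod ≤ (l.map wlen).sum := by
  induction l with
  | nil => simp [wlen_one]
  | cons a l ih =>
    simp only [List.prod_cons, List.map_cons, List.sum_cons]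
    exact (wlen_mul_le a l.prod).trans (by omega)

lemma ReducedProd.split {l₁ l₂ : List (FreeGroup α)} (h : ReducedProd (l₁ ++ l₂)) :
    Red2 l₁.prod l₂.prod ∧ ReducedProd l₁ ∧ ReducedProd l₂ := by
  unfold ReducedProd at *
  rw [List.prod_append, List.map_append, List.sum_append] at h
  have l1 := wlen_prod_le l₁
  have l2 := wlen_prod_le l₂
  have l3 := wlen_mul_le l₁.prod l₂.prod
  unfold Red2
  refine ⟨by omega, by omega, by omega⟩

/-! ### commonPrefix lemmas -/

lemma commonPrefix_prefix_left {β : Type} [DecidableEq β] :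
    ∀ (l l' : List β), commonPrefix l l' <+: l
  | [], _ => by simp [commonPrefix]
  | a :: as, [] => by simp [commonPrefix]
  | a :: as, b :: bs => by
    rw [commonPrefix]
    split
    · exact (List.cons_prefix_cons).mpr ⟨rfl, commonPrefix_prefix_left as bs⟩
    · exact List.nil_prefix

lemma commonPrefix_comm {β : Type} [DecidableEq β] :
    ∀ (l l' : List β), commonPrefix l l' = commonPrefix l' l
  | [], [] => rfl
  | [], _ :: _ => by simp [commonPrefix]
  | _ :: _, [] => by simp [commonPrefix]
  | a :: as, b :: bs => by
    rw [commonPrefix, commonPrefix]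
    by_cases h : a = b
    · subst h; rw [if_pos rfl, if_pos rfl, commonPrefix_comm as bs]
    · rw [if_neg h, if_neg (fun e => h e.symm)]

lemma commonPrefix_prefix_right {β : Type} [DecidableEq β] (l l' : List β) :
    commonPrefix l l' <+: l' := by
  rw [commonPrefix_comm]; exact commonPrefix_prefix_left l' l

lemma prefix_commonPrefix {β : Type} [DecidableEq β] :
    ∀ (p l l' : List β), p <+: l → p <+: l' → p <+: commonPrefix l l'
  | [], _, _, _, _ => List.nil_prefix
  | c :: p, l, l', h1, h2 => by
    obtain ⟨r1, rfl⟩ := h1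
    obtain ⟨r2, rfl⟩ := h2
    rw [List.cons_append, List.cons_append, commonPrefix, if_pos rfl]
    exact (List.cons_prefix_cons).mpr
      ⟨rfl, prefix_commonPrefix p _ _ (p.prefix_append r1) (p.prefix_append r2)⟩

lemma commonPrefix_eq_left {β : Type} [DecidableEq β] {l l' : List β} (h : l <+: l') :
    commonPrefix l l' = l := by
  have h1 := commonPrefix_prefix_left l l'
  have h2 := prefix_commonPrefix l l l' (List.prefix_refl l) h
  exact h1.eq_of_length (Nat.le_antisymm h1.length_le h2.length_le)

lemma commonPrefix_eq_right {β : Type} [DecidableEq β] {l l' : List β} (h : l' <+: l) :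
    commonPrefix l l' = l' := by
  rw [commonPrefix_comm]; exact commonPrefix_eq_left h

lemma prefix_of_prefix_length_le' {β : Type} {p q l : List β}
    (hp : p <+: l) (hq : q <+: l) (h : p.length ≤ q.length) : p <+: q := by
  have e1 := List.prefix_iff_eq_take.mp hp
  have e2 := List.prefix_iff_eq_take.mp hq
  have e3 : q.take p.length = p := by
    conv_lhs => rw [e2]
    rw [List.take_take, Nat.min_eq_left h]
    exact e1.symm
  exact e3 ▸ List.take_prefix p.length q

end Aux
section Aux2
set_option linter.unusedSectionVars false
variable {α : Type} [DecidableEq α]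

@[simp] lemma seqInv_nil : seqInv ([] : List (FreeGroup α)) = [] := rfl

@[simp] lemma length_seqInv (l : List (FreeGroup α)) : (seqInv l).length = l.length := by
  simp [seqInv]

lemma seqInv_append (l₁ l₂ : List (FreeGroup α)) :
    seqInv (l₁ ++ l₂) = seqInv l₂ ++ seqInv l₁ := by simp [seqInv]

@[simp] lemma seqInv_seqInv (l : List (FreeGroup α)) : seqInv (seqInv l) = l := by
  simp [seqInv, List.map_reverse, List.map_map]

lemma prod_seqInv (l : List (FreeGroup α)) : (seqInv l).prod = l.prod⁻¹ := by
  induction l with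
  | nil => simp [seqInv]
  | cons a l ih =>
    have e : seqInv (a :: l) = seqInv l ++ [a⁻¹] := by simp [seqInv]
    rw [e, List.prod_append, ih]
    simp

lemma seqInv_drop {l : List (FreeGroup α)} {n : ℕ} (h : n ≤ l.length) :
    (seqInv l).drop n = seqInv (l.take (l.length - n)) := by
  unfold seqInv
  rw [List.map_take, List.reverse_take]
  congr 1
  rw [List.length_map]
  omega

lemma seqInv_take_drop (l : List (FreeGroup α)) (n : ℕ) :
    seqInv l = seqInv (l.drop n) ++ seqInv (l.take n) := by
  rw [← seqInv_append, List.take_append_drop]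

namespace Decomp
variable (dec : Decomp α)

lemma D_take (g : FreeGroup α) (j : ℕ) :
    dec.D (((dec.D g).take j).prod) = (dec.D g).take j :=
  dec.infix_closed g [] _ ((dec.D g).drop j) (by simp)

lemma D_drop (g : FreeGroup α) (j : ℕ) :
    dec.D (((dec.D g).drop j).prod) = (dec.D g).drop j :=
  dec.infix_closed g ((dec.D g).take j) _ [] (by simp)

lemma ne_one_of_mem {g p : FreeGroup α} (h : p ∈ dec.D g) : p ≠ 1 := fun e =>
  dec.one_notin_pieces (e ▸ dec.mem_pieces g p h)

lemma cp_nil {x y : FreeGroup α} (h : Red2 x y) :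
    commonPrefix (dec.D x⁻¹) (dec.D y) = [] := by
  cases hcp : commonPrefix (dec.D x⁻¹) (dec.D y) with
  | nil => rfl
  | cons p tl =>
    exfalso
    have h1 : p :: tl <+: dec.D x⁻¹ := hcp ▸ commonPrefix_prefix_left _ _
    have h2 : p :: tl <+: dec.D y := hcp ▸ commonPrefix_prefix_right _ _
    obtain ⟨r1, hr1⟩ := h1
    obtain ⟨r2, hr2⟩ := h2
    have hx : x⁻¹ = p * (tl ++ r1).prod := by
      rw [← dec.prod_eq x⁻¹, ← hr1]; simp
    have hy : y = p * (tl ++ r2).prod := by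
      rw [← dec.prod_eq y, ← hr2]; simp
    have hrx : Red2 p (tl ++ r1).prod := by
      have hr := dec.reduced x⁻¹
      rw [← hr1] at hr
      have e : (p :: tl) ++ r1 = [p] ++ (tl ++ r1) := by simp
      rw [e] at hr
      have := (ReducedProd.split hr).1
      simpa using this
    have hry : Red2 p (tl ++ r2).prod := by
      have hr := dec.reduced y
      rw [← hr2] at hr
      have e : (p :: tl) ++ r2 = [p] ++ (tl ++ r2) := by simp
      rw [e] at hr
      have := (ReducedProd.split hr).1
      simpa using this
    have hp1 : p ≠ 1 := dec.ne_one_of_mem (g := y)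
      (by rw [← hr2]; exact List.mem_append_left _ List.mem_cons_self)
    have exy : x * y = (tl ++ r1).prod⁻¹ * (tl ++ r2).prod := by
      have hx' : x = (p * (tl ++ r1).prod)⁻¹ := by rw [← hx, inv_inv]
      rw [hx', hy]; group
    have hwx : wlen x = wlen p + wlen (tl ++ r1).prod := by
      rw [← wlen_inv x, hx]; exact hrx
    have hwy : wlen y = wlen p + wlen (tl ++ r2).prod := by
      rw [hy]; exact hry
    unfold Red2 at h
    rw [exy] at h
    have hle := wlen_mul_le (tl ++ r1).prod⁻¹ (tl ++ r2).prod
    rw [wlen_inv] at hle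
    have hp0 : wlen p = 0 := by omega
    exact hp1 (wlen_eq_zero.mp hp0)

lemma suf {x z : FreeGroup α} (h : Red2 x z) :
    ∃ m, m ≤ dec.R ∧ m ≤ (dec.D z).length ∧
      ∃ Z, dec.D (x * z) = Z ++ (dec.D z).drop m := by
  have hc2 : cSeq2 dec.D x z = [] := dec.cp_nil h
  have ht2 := dec.triangle₂ x z
  rw [hc2, List.nil_append] at ht2
  refine ⟨(rSeq2 dec.D x z).length, dec.rBound₂ x z, ?_, ?_⟩
  · rw [ht2]; simp
  · have hdrop : (dec.D z).drop (rSeq2 dec.D x z).length = seqInv (cSeq3 dec.D x z) := by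
      rw [ht2]; exact List.drop_left
    have ht3 := dec.triangle₃ x z
    have hD : dec.D (x * z) = seqInv (dec.D (z⁻¹ * x⁻¹)) := by
      rw [show z⁻¹ * x⁻¹ = (x * z)⁻¹ from (mul_inv_rev x z).symm, dec.inv_eq, seqInv_seqInv]
    rw [ht3] at hD
    refine ⟨cSeq1 dec.D x z ++ seqInv (rSeq3 dec.D x z), ?_⟩
    rw [hD, seqInv_append, seqInv_append, seqInv_seqInv, hdrop]
    simp [List.append_assoc]

lemma pref {x z : FreeGroup α} (h : Red2 x z) :
    ∃ t, t ≤ dec.R ∧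
      (dec.D x).length = (commonPrefix (dec.D x) (dec.D (x * z))).length + t := by
  have hc2 : cSeq2 dec.D x z = [] := dec.cp_nil h
  have ht1 := dec.triangle₁ x z
  rw [hc2] at ht1
  refine ⟨(rSeq1 dec.D x z).length, dec.rBound₁ x z, ?_⟩
  conv_lhs => rw [ht1]
  simp [cSeq1]

lemma lb2 {x z : FreeGroup α} (h : Red2 x z) :
    (dec.D z).length ≤ dec.R + (commonPrefix (dec.D (z⁻¹ * x⁻¹)) (dec.D z⁻¹)).length := by
  obtain ⟨m, hmR, hml, Z, hZ⟩ := dec.suf h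
  have hD : dec.D (z⁻¹ * x⁻¹) = seqInv ((dec.D z).drop m) ++ seqInv Z := by
    rw [show z⁻¹ * x⁻¹ = (x * z)⁻¹ from (mul_inv_rev x z).symm, dec.inv_eq, hZ, seqInv_append]
  have hDz : dec.D z⁻¹ = seqInv ((dec.D z).drop m) ++ seqInv ((dec.D z).take m) := by
    rw [dec.inv_eq, seqInv_take_drop _ m]
  have hpre := prefix_commonPrefix (seqInv ((dec.D z).drop m)) _ _
    ⟨seqInv Z, hD.symm⟩ ⟨seqInv ((dec.D z).take m), hDz.symm⟩
  have hlen := hpre.length_le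
  rw [length_seqInv, List.length_drop] at hlen
  omega

lemma lb3 {x z : FreeGroup α} (h : Red2 x z) :
    (dec.D x).length ≤ dec.R + (commonPrefix (dec.D (x * z)) (dec.D x)).length := by
  obtain ⟨t, htR, hlen⟩ := dec.pref h
  rw [commonPrefix_comm]
  omega

lemma step {x y : FreeGroup α} (hxy : Red2 x y) {i : ℕ}
    (hR : dec.R ≤ i) (hi : i + 1 ≤ (dec.D y).length) :
    dec.D (x * ((dec.D y).take (i + 1)).prod) =
      dec.D (x * ((dec.D y).take i).prod) ++ [(dec.D y).getD i 1] := by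
  have hil : i < (dec.D y).length := hi
  have htake : (dec.D y).take (i+1) = (dec.D y).take i ++ [(dec.D y).getD i 1] := by
    rw [List.take_succ, List.getD_eq_getElem _ _ hil]
    simp [List.getElem?_eq_getElem hil]
  have hredL : ReducedProd ((dec.D y).take (i+1) ++ (dec.D y).drop (i+1)) := by
    rw [List.take_append_drop]; exact dec.reduced y
  have hsp := ReducedProd.split hredL
  have hprodsplit : ((dec.D y).take (i+1)).prod * ((dec.D y).drop (i+1)).prod = y := by
    rw [← List.prod_append, List.take_append_drop]; exact dec.prod_eq y
  have hxa : Red2 x (((dec.D y).take (i+1)).prod) := by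
    have h' : Red2 x (((dec.D y).take (i+1)).prod * ((dec.D y).drop (i+1)).prod) := by
      rw [hprodsplit]; exact hxy
    exact (h'.split_right hsp.1).1
  obtain ⟨m, hmR, hml, Z, hZ⟩ := dec.suf hxa
  rw [dec.D_take y (i+1), htake,
    List.drop_append_of_le_length (by rw [List.length_take]; omega)] at hZ
  rw [htake]
  have hZ' : dec.D (x * ((dec.D y).take i ++ [(dec.D y).getD i 1]).prod)
      = (Z ++ ((dec.D y).take i).drop m) ++ [(dec.D y).getD i 1] := by
    rw [hZ, List.append_assoc]
  have hic := dec.infix_closed (x * ((dec.D y).take i ++ [(dec.D y).getD i 1]).prod) []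
    (Z ++ ((dec.D y).take i).drop m) [(dec.D y).getD i 1] (by rw [hZ']; simp)
  have hprod : (Z ++ ((dec.D y).take i).drop m).prod = x * ((dec.D y).take i).prod := by
    have hp := dec.prod_eq (x * ((dec.D y).take i ++ [(dec.D y).getD i 1]).prod)
    rw [hZ', List.prod_append, List.prod_cons, List.prod_nil, mul_one] at hp
    have e2 : ((dec.D y).take i ++ [(dec.D y).getD i 1]).prod
        = ((dec.D y).take i).prod * (dec.D y).getD i 1 := by
      rw [List.prod_append]; simp
    rw [e2, ← mul_assoc] at hp
    exact mul_right_cancel hp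
  rw [hprod] at hic
  rw [hZ', hic]

lemma chain {x y : FreeGroup α} (hxy : Red2 x y) :
    ∀ n, n + dec.R ≤ (dec.D y).length →
      dec.D (x * ((dec.D y).take ((dec.D y).length - n)).prod)
          ++ (dec.D y).drop ((dec.D y).length - n)
        = dec.D (x * y) := by
  intro n
  induction n with
  | zero =>
    intro _
    rw [Nat.sub_zero, List.take_length, List.drop_length, dec.prod_eq y, List.append_nil]
  | succ n ih =>
    intro hn
    have hR := dec.R_pos
    have hil : (dec.D y).length - (n+1) < (dec.D y).length := by omega
    have hstep := dec.step hxy (i := (dec.D y).length - (n+1)) (by omega) (by omega)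
    rw [← ih (by omega)]
    rw [show (dec.D y).length - n = ((dec.D y).length - (n+1)) + 1 from by omega, hstep]
    rw [← List.getElem_cons_drop hil, ← List.getD_eq_getElem _ 1 hil]
    simp

lemma chain' {x y : FreeGroup α} (hxy : Red2 x y) {i : ℕ}
    (hR : dec.R ≤ i) (hik : i ≤ (dec.D y).length) :
    dec.D (x * ((dec.D y).take i).prod) ++ (dec.D y).drop i = dec.D (x * y) := by
  have h := dec.chain hxy ((dec.D y).length - i) (by omega)
  rw [show (dec.D y).length - ((dec.D y).length - i) = i from by omega] at h
  exact h

end Decomp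
end Aux2
section Aux3
set_option linter.unusedSectionVars false
set_option maxHeartbeats 1000000
variable {α : Type} [DecidableEq α]

lemma seqAgree_eq_top {β : Type} [DecidableEq β] {l l' : List β} (h : l = l') :
    seqAgree l l' = ⊤ := if_pos h

lemma seqAgree_eq_len {β : Type} [DecidableEq β] {l l' : List β} (h : l ≠ l') :
    seqAgree l l' = ((commonPrefix l l').length : ℕ∞) := if_neg h

lemma NDelta_eq {D : FreeGroup α → List (FreeGroup α)} {g h g' h' : FreeGroup α}
    (hne : ((g, h) : _ × _) ≠ (g', h'))
    (h1 : rSeq1 D g h = rSeq1 D g' h') (h2 : rSeq2 D g h = rSeq2 D g' h')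
    (h3 : rSeq3 D g h = rSeq3 D g' h') :
    NDelta D (g, h) (g', h') =
      min (seqAgree (seqInv (cSeq1 D g h)) (seqInv (cSeq1 D g' h')))
        (min (seqAgree (seqInv (cSeq2 D g h)) (seqInv (cSeq2 D g' h')))
          (seqAgree (seqInv (cSeq3 D g h)) (seqInv (cSeq3 D g' h')))) := by
  unfold NDelta
  rw [if_neg hne, if_pos ⟨h1, h2, h3⟩]

namespace Decomp
variable (dec : Decomp α)

lemma key {u v₁ v₂ : FreeGroup α}
    (hv1u : Red2 v₁ u) (huv2 : Red2 u v₂) (hv1uv2 : Red2 (v₁ * u) v₂)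
    {i : ℕ} (hRi : dec.R ≤ i) (hiR : i + dec.R ≤ (dec.D u).length)
    (hnt : ¬(v₁ = 1 ∧ v₂ = 1)) :
    (((((dec.D u).take i).prod⁻¹ * v₁⁻¹, v₁ * u * v₂) : _ × _)
        ≠ (((dec.D u).take i).prod⁻¹, u)) ∧
    ∃ N : ℕ,
      NDelta dec.D (((dec.D u).take i).prod⁻¹ * v₁⁻¹, v₁ * u * v₂)
        (((dec.D u).take i).prod⁻¹, u) = (N : ℕ∞) ∧
      (i ≤ N + dec.R ∧ N ≤ i ∨
        (dec.D u).length - i ≤ N + dec.R ∧ N ≤ (dec.D u).length - i) := by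
  have hk : i ≤ (dec.D u).length := by have := dec.R_pos; omega
  have hAS : ((dec.D u).take i).prod * ((dec.D u).drop i).prod = u := by
    rw [← List.prod_append, List.take_append_drop]; exact dec.prod_eq u
  have hredu : ReducedProd ((dec.D u).take i ++ (dec.D u).drop i) := by
    rw [List.take_append_drop]; exact dec.reduced u
  have hASr : Red2 ((dec.D u).take i).prod ((dec.D u).drop i).prod := (ReducedProd.split hredu).1
  have hv1A : Red2 v₁ ((dec.D u).take i).prod := by
    have h' : Red2 v₁ (((dec.D u).take i).prod * ((dec.D u).drop i).prod) := by
      rw [hAS]; exact hv1u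
    exact (h'.split_right hASr).1
  have hSv2 : Red2 ((dec.D u).drop i).prod v₂ := by
    have h' : Red2 (((dec.D u).take i).prod * ((dec.D u).drop i).prod) v₂ := by
      rw [hAS]; exact huv2
    exact (h'.split_left hASr).1
  have hbig : Red2 (v₁ * ((dec.D u).take i).prod) (((dec.D u).drop i).prod * v₂) := by
    have e : (v₁ * ((dec.D u).take i).prod) * (((dec.D u).drop i).prod * v₂)
        = (v₁ * u) * v₂ := by
      have e' : (v₁ * ((dec.D u).take i).prod) * (((dec.D u).drop i).prod * v₂)
          = (v₁ * (((dec.D u).take i).prod * ((dec.D u).drop i).prod)) * v₂ := by group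
      rw [hAS] at e'
      exact e'
    have e2 : wlen (((dec.D u).take i).prod * ((dec.D u).drop i).prod) = wlen u := by rw [hAS]
    unfold Red2 at hv1u huv2 hv1uv2 hv1A hSv2 hASr
    unfold Red2
    rw [e]
    omega
  -- prefix structure
  have hch := dec.chain' hv1u hRi hk
  obtain ⟨t, htR, hlent⟩ := dec.pref hv1uv2
  have hlch := congrArg List.length hch
  rw [List.length_append, List.length_drop] at hlch
  have hcpP := commonPrefix_prefix_left (dec.D (v₁ * u)) (dec.D (v₁ * u * v₂))
  have hpre1 : dec.D (v₁ * ((dec.D u).take i).prod) <+: dec.D (v₁ * u) := ⟨_, hch⟩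
  have hsub : dec.D (v₁ * ((dec.D u).take i).prod)
      <+: commonPrefix (dec.D (v₁ * u)) (dec.D (v₁ * u * v₂)) :=
    prefix_of_prefix_length_le' hpre1 hcpP (by omega)
  have hp_full : dec.D (v₁ * ((dec.D u).take i).prod) <+: dec.D (v₁ * u * v₂) :=
    hsub.trans (commonPrefix_prefix_right _ _)
  obtain ⟨Y, hY⟩ := hp_full
  have hYD : dec.D (((dec.D u).drop i).prod * v₂) = Y := by
    have hic := dec.infix_closed (v₁ * u * v₂) (dec.D (v₁ * ((dec.D u).take i).prod)) Y []
      (by rw [← hY]; simp)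
    have hprodY : Y.prod = ((dec.D u).drop i).prod * v₂ := by
      have hp := dec.prod_eq (v₁ * u * v₂)
      rw [← hY, List.prod_append, dec.prod_eq] at hp
      have h2 : Y.prod = (v₁ * ((dec.D u).take i).prod)⁻¹ * (v₁ * u * v₂) := by
        rw [← hp]; group
      have h3 : (v₁ * ((dec.D u).take i).prod)⁻¹
          * (v₁ * (((dec.D u).take i).prod * ((dec.D u).drop i).prod) * v₂)
          = ((dec.D u).drop i).prod * v₂ := by group
      rw [hAS] at h3
      rw [h2, h3]
    rw [hprodY] at hic; exact hic
  -- lengths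
  have lA : (dec.D (((dec.D u).take i).prod)).length = i := by
    rw [dec.D_take u i, List.length_take]; exact Nat.min_eq_left hk
  have lAinv : (dec.D (((dec.D u).take i).prod⁻¹)).length = i := by
    rw [dec.inv_eq, length_seqInv]; exact lA
  have lS : (dec.D (((dec.D u).drop i).prod)).length = (dec.D u).length - i := by
    rw [dec.D_drop u i, List.length_drop]
  -- c-sequences of the p-pair
  have c2p : cSeq2 dec.D (((dec.D u).take i).prod⁻¹ * v₁⁻¹) (v₁ * u * v₂)
      = dec.D (v₁ * ((dec.D u).take i).prod) := by
    unfold cSeq2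
    rw [show (((dec.D u).take i).prod⁻¹ * v₁⁻¹)⁻¹ = v₁ * ((dec.D u).take i).prod from by group]
    exact commonPrefix_eq_left ⟨Y, hY⟩
  have e3 : (v₁ * u * v₂)⁻¹ * (((dec.D u).take i).prod⁻¹ * v₁⁻¹)⁻¹
      = (((dec.D u).drop i).prod * v₂)⁻¹ := by
    have e3' : (v₁ * (((dec.D u).take i).prod * ((dec.D u).drop i).prod) * v₂)⁻¹
        * (((dec.D u).take i).prod⁻¹ * v₁⁻¹)⁻¹
        = (((dec.D u).drop i).prod * v₂)⁻¹ := by group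
    rw [hAS] at e3'
    exact e3'
  have c3p : cSeq3 dec.D (((dec.D u).take i).prod⁻¹ * v₁⁻¹) (v₁ * u * v₂) = seqInv Y := by
    unfold cSeq3
    rw [e3, dec.inv_eq, dec.inv_eq, hYD, ← hY, seqInv_append]
    exact commonPrefix_eq_right (List.prefix_append _ _)
  have eS : (((dec.D u).take i).prod⁻¹ * v₁⁻¹) * (v₁ * u * v₂)
      = ((dec.D u).drop i).prod * v₂ := by
    have eS' : (((dec.D u).take i).prod⁻¹ * v₁⁻¹)
        * (v₁ * (((dec.D u).take i).prod * ((dec.D u).drop i).prod) * v₂)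
        = ((dec.D u).drop i).prod * v₂ := by group
    rw [hAS] at eS'
    exact eS'
  have c1p : cSeq1 dec.D (((dec.D u).take i).prod⁻¹ * v₁⁻¹) (v₁ * u * v₂) = [] := by
    unfold cSeq1
    rw [eS]
    have h0 := dec.cp_nil hbig
    rw [show (v₁ * ((dec.D u).take i).prod)⁻¹ = ((dec.D u).take i).prod⁻¹ * v₁⁻¹ from by group]
      at h0
    exact h0
  -- c-sequences of the q-pair
  have c2q : cSeq2 dec.D (((dec.D u).take i).prod⁻¹) u = (dec.D u).take i := by
    unfold cSeq2
    rw [inv_inv, dec.D_take u i]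
    exact commonPrefix_eq_left (List.take_prefix i (dec.D u))
  have e4 : u⁻¹ * (((dec.D u).take i).prod⁻¹)⁻¹ = (((dec.D u).drop i).prod)⁻¹ := by
    have e4' : (((dec.D u).take i).prod * ((dec.D u).drop i).prod)⁻¹
        * (((dec.D u).take i).prod⁻¹)⁻¹ = (((dec.D u).drop i).prod)⁻¹ := by group
    rw [hAS] at e4'
    exact e4'
  have c3q : cSeq3 dec.D (((dec.D u).take i).prod⁻¹) u = seqInv ((dec.D u).drop i) := by
    unfold cSeq3
    rw [e4, dec.inv_eq u, dec.inv_eq, dec.D_drop u i, seqInv_take_drop (dec.D u) i]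
    exact commonPrefix_eq_right (List.prefix_append _ _)
  have e5 : (((dec.D u).take i).prod⁻¹) * u = ((dec.D u).drop i).prod := by
    have e5' : (((dec.D u).take i).prod⁻¹)
        * (((dec.D u).take i).prod * ((dec.D u).drop i).prod)
        = ((dec.D u).drop i).prod := by group
    rw [hAS] at e5'
    exact e5'
  have c1q : cSeq1 dec.D (((dec.D u).take i).prod⁻¹) u = [] := by
    unfold cSeq1
    rw [e5]
    exact dec.cp_nil hASr
  -- r-sequences vanish
  have hgp : (dec.D (((dec.D u).take i).prod⁻¹ * v₁⁻¹)).length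
      = (dec.D (v₁ * ((dec.D u).take i).prod)).length := by
    rw [show ((dec.D u).take i).prod⁻¹ * v₁⁻¹ = (v₁ * ((dec.D u).take i).prod)⁻¹ from by group,
      dec.inv_eq, length_seqInv]
  have r1p : rSeq1 dec.D (((dec.D u).take i).prod⁻¹ * v₁⁻¹) (v₁ * u * v₂) = [] := by
    unfold rSeq1
    rw [c1p, c2p]
    have e0 : (dec.D (((dec.D u).take i).prod⁻¹ * v₁⁻¹)).length - ([] : List (FreeGroup α)).length
        - (dec.D (v₁ * ((dec.D u).take i).prod)).length = 0 := by
      rw [hgp]; simp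
    rw [e0, List.take_zero]
  have r2p : rSeq2 dec.D (((dec.D u).take i).prod⁻¹ * v₁⁻¹) (v₁ * u * v₂) = [] := by
    unfold rSeq2
    rw [c2p, c3p, length_seqInv]
    have e0 : (dec.D (v₁ * u * v₂)).length - (dec.D (v₁ * ((dec.D u).take i).prod)).length
        - Y.length = 0 := by
      rw [← hY, List.length_append]; omega
    rw [e0, List.take_zero]
  have r3p : rSeq3 dec.D (((dec.D u).take i).prod⁻¹ * v₁⁻¹) (v₁ * u * v₂) = [] := by
    unfold rSeq3
    rw [e3, dec.inv_eq, hYD, c3p, c1p]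
    have e0 : (seqInv Y).length - (seqInv Y).length - ([] : List (FreeGroup α)).length = 0 := by
      omega
    rw [e0, List.take_zero]
  have r1q : rSeq1 dec.D (((dec.D u).take i).prod⁻¹) u = [] := by
    unfold rSeq1
    rw [c1q, c2q]
    have e0 : (dec.D (((dec.D u).take i).prod⁻¹)).length - ([] : List (FreeGroup α)).length
        - ((dec.D u).take i).length = 0 := by
      rw [lAinv, List.length_take]; omega
    rw [e0, List.take_zero]
  have r2q : rSeq2 dec.D (((dec.D u).take i).prod⁻¹) u = [] := by
    unfold rSeq2
    rw [c2q, c3q, length_seqInv]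
    have e0 : (dec.D u).length - ((dec.D u).take i).length - ((dec.D u).drop i).length = 0 := by
      rw [List.length_take, List.length_drop]; omega
    rw [e0, List.take_zero]
  have r3q : rSeq3 dec.D (((dec.D u).take i).prod⁻¹) u = [] := by
    unfold rSeq3
    rw [e4, dec.inv_eq, dec.D_drop u i, c3q, c1q, length_seqInv]
    have e0 : ((dec.D u).drop i).length - ((dec.D u).drop i).length
        - ([] : List (FreeGroup α)).length = 0 := by
      omega
    rw [e0, List.take_zero]
  -- the two pairs are distinct
  have hne : ((((dec.D u).take i).prod⁻¹ * v₁⁻¹, v₁ * u * v₂) : _ × _)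
      ≠ (((dec.D u).take i).prod⁻¹, u) := by
    intro he
    have h2 : v₁ * u * v₂ = u := congrArg Prod.snd he
    have hw := congrArg wlen h2
    unfold Red2 at hv1u hv1uv2
    have h1 : wlen v₁ = 0 := by omega
    have h3 : wlen v₂ = 0 := by omega
    exact hnt ⟨wlen_eq_zero.mp h1, wlen_eq_zero.mp h3⟩
  refine ⟨hne, ?_⟩
  rw [NDelta_eq hne (by rw [r1p, r1q]) (by rw [r2p, r2q]) (by rw [r3p, r3q])]
  rw [c1p, c1q, seqInv_nil, seqAgree_eq_top rfl, min_eq_right le_top]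
  rw [c2p, c3p, c2q, c3q, seqInv_seqInv, seqInv_seqInv]
  have sA2 : seqInv (dec.D (v₁ * ((dec.D u).take i).prod))
      = dec.D (((dec.D u).take i).prod⁻¹ * v₁⁻¹) := by
    rw [show ((dec.D u).take i).prod⁻¹ * v₁⁻¹ = (v₁ * ((dec.D u).take i).prod)⁻¹ from by group,
      dec.inv_eq]
  have sq2 : seqInv ((dec.D u).take i) = dec.D (((dec.D u).take i).prod⁻¹) := by
    rw [dec.inv_eq, dec.D_take u i]
  rw [sA2, sq2, ← hYD]
  by_cases hv1 : v₁ = 1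
  · have hv2 : v₂ ≠ 1 := fun h => hnt ⟨hv1, h⟩
    have hA2top : seqAgree (dec.D (((dec.D u).take i).prod⁻¹ * v₁⁻¹))
        (dec.D (((dec.D u).take i).prod⁻¹)) = ⊤ :=
      seqAgree_eq_top (by rw [hv1]; simp)
    have hA3ne : dec.D (((dec.D u).drop i).prod * v₂) ≠ (dec.D u).drop i := by
      intro hll
      have hpp := congrArg List.prod hll
      rw [dec.prod_eq] at hpp
      exact hv2 (by rwa [mul_eq_left] at hpp)
    rw [hA2top, seqAgree_eq_len hA3ne, min_eq_right le_top]
    refine ⟨_, rfl, Or.inr ⟨?_, ?_⟩⟩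
    · have hb := dec.lb3 hSv2
      rw [dec.D_drop u i] at hb
      rw [List.length_drop] at hb
      omega
    · have hb := (commonPrefix_prefix_right (dec.D (((dec.D u).drop i).prod * v₂))
        ((dec.D u).drop i)).length_le
      rw [List.length_drop] at hb
      omega
  · by_cases hv2 : v₂ = 1
    · have hA3top : seqAgree (dec.D (((dec.D u).drop i).prod * v₂))
          ((dec.D u).drop i) = ⊤ :=
        seqAgree_eq_top (by rw [hv2, mul_one, dec.D_drop u i])
      have hA2ne : dec.D (((dec.D u).take i).prod⁻¹ * v₁⁻¹)
          ≠ dec.D (((dec.D u).take i).prod⁻¹) := by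
        intro hll
        have hpp := congrArg List.prod hll
        rw [dec.prod_eq, dec.prod_eq] at hpp
        rw [mul_eq_left, inv_eq_one] at hpp
        exact hv1 hpp
      rw [hA3top, seqAgree_eq_len hA2ne, min_eq_left le_top]
      refine ⟨_, rfl, Or.inl ⟨?_, ?_⟩⟩
      · have := dec.lb2 hv1A
        rw [lA] at this
        omega
      · have := (commonPrefix_prefix_right (dec.D (((dec.D u).take i).prod⁻¹ * v₁⁻¹))
          (dec.D (((dec.D u).take i).prod⁻¹))).length_le
        rw [lAinv] at this
        omega
    · have hA2ne : dec.D (((dec.D u).take i).prod⁻¹ * v₁⁻¹)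
          ≠ dec.D (((dec.D u).take i).prod⁻¹) := by
        intro hll
        have hpp := congrArg List.prod hll
        rw [dec.prod_eq, dec.prod_eq] at hpp
        rw [mul_eq_left, inv_eq_one] at hpp
        exact hv1 hpp
      have hA3ne : dec.D (((dec.D u).drop i).prod * v₂) ≠ (dec.D u).drop i := by
        intro hll
        have hpp := congrArg List.prod hll
        rw [dec.prod_eq] at hpp
        exact hv2 (by rwa [mul_eq_left] at hpp)
      rw [seqAgree_eq_len hA2ne, seqAgree_eq_len hA3ne]
      have hb2l := dec.lb2 hv1A
      rw [lA] at hb2l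
      have hb2u := (commonPrefix_prefix_right (dec.D (((dec.D u).take i).prod⁻¹ * v₁⁻¹))
        (dec.D (((dec.D u).take i).prod⁻¹))).length_le
      rw [lAinv] at hb2u
      have hb3l := dec.lb3 hSv2
      rw [dec.D_drop u i] at hb3l
      rw [List.length_drop] at hb3l
      have hb3u := (commonPrefix_prefix_right (dec.D (((dec.D u).drop i).prod * v₂))
        ((dec.D u).drop i)).length_le
      rw [List.length_drop] at hb3u
      rcases le_total
        ((commonPrefix (dec.D (((dec.D u).take i).prod⁻¹ * v₁⁻¹))
          (dec.D (((dec.D u).take i).prod⁻¹))).length)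
        ((commonPrefix (dec.D (((dec.D u).drop i).prod * v₂)) ((dec.D u).drop i)).length)
        with hle | hle
      · rw [min_eq_left (by exact_mod_cast hle : _ ≤ ((_ : ℕ) : ℕ∞))]
        exact ⟨_, rfl, Or.inl ⟨by omega, by omega⟩⟩
      · rw [min_eq_right (by exact_mod_cast hle : _ ≤ ((_ : ℕ) : ℕ∞))]
        exact ⟨_, rfl, Or.inr ⟨by omega, by omega⟩⟩

end Decomp
end Aux3
section Aux4
set_option linter.unusedSectionVars false
set_option maxHeartbeats 1000000
variable {α : Type} [DecidableEq α]

lemma zetaL_eq_sum (A : FreeGroup α → FreeGroup α → FreeGroup α → ℝ)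
    (l : List (FreeGroup α)) (g' h : FreeGroup α) :
    zetaL A l g' h
      = ∑ j ∈ Finset.range l.length, A (l.getD j 1) ((l.drop (j+1)).prod * g') h := by
  induction l with
  | nil => simp [zetaL]
  | cons p rest ih =>
    rw [show zetaL A (p :: rest) g' h = A p (rest.prod * g') h + zetaL A rest g' h from rfl,
      ih, List.length_cons, Finset.sum_range_succ']
    simp only [List.getD_cons_succ, List.getD_cons_zero, List.drop_succ_cons, zero_add,
      List.drop_one, List.tail_cons, List.drop_zero]
    rw [add_comm]

lemma phi_piece_bound (dec : Decomp α) (lam : FreeGroup α → ℝ) {B : ℝ}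
    (hB : ∀ p ∈ dec.pieces, |lam p| ≤ B) (g : FreeGroup α) {j : ℕ}
    (hj : j < (dec.D g).length) :
    |decQM dec.D lam ((dec.D g).getD j 1)| ≤ B := by
  have hmem : (dec.D g).getD j 1 ∈ dec.D g := by
    rw [List.getD_eq_getElem _ _ hj]; exact List.getElem_mem _
  have hsplit : dec.D g = (dec.D g).take j ++ [(dec.D g).getD j 1] ++ (dec.D g).drop (j+1) := by
    rw [List.getD_eq_getElem _ _ hj, List.append_assoc, List.singleton_append,
      List.getElem_cons_drop hj, List.take_append_drop]
  have hD := dec.infix_closed g _ _ _ hsplit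
  rw [List.prod_singleton] at hD
  unfold decQM
  rw [hD]
  simp only [List.map_cons, List.map_nil, List.sum_cons, List.sum_nil, add_zero]
  exact hB _ (dec.mem_pieces g _ hmem)

lemma sum_s_le (s : ℕ → ℝ) (hs0 : ∀ n, 0 ≤ s n) (hsum : Summable s) (R : ℕ)
    (F : Finset ℕ) (N g : ℕ → ℕ) (hinj : Set.InjOn g ↑F)
    (h : ∀ i ∈ F, g i ≤ N i + R ∧ N i ≤ g i) :
    ∑ i ∈ F, s (N i) ≤ ((R : ℝ) + 1) * ∑' n, s n := by
  classical
  have hmap : ∀ i ∈ F, g i - N i ∈ Finset.range (R+1) := fun i hi =>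
    Finset.mem_range.mpr (by have := h i hi; omega)
  rw [← Finset.sum_fiberwise_of_maps_to hmap (fun i => s (N i))]
  have hinner : ∀ d ∈ Finset.range (R+1),
      ∑ i ∈ F.filter (fun i => g i - N i = d), s (N i) ≤ ∑' n, s n := by
    intro d _
    have hNinj : ∀ x ∈ F.filter (fun i => g i - N i = d),
        ∀ y ∈ F.filter (fun i => g i - N i = d), N x = N y → x = y := by
      intro x hx y hy hxy
      rw [Finset.mem_filter] at hx hy
      have hx2 := h x hx.1
      have hy2 := h y hy.1
      have hgxy : g x = g y := by
        have hdx : g x - N x = d := hx.2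
        have hdy : g y - N y = d := hy.2
        omega
      exact hinj (Finset.mem_coe.mpr hx.1) (Finset.mem_coe.mpr hy.1) hgxy
    rw [← Finset.sum_image hNinj]
    exact Summable.sum_le_tsum _ (fun n _ => hs0 n) hsum
  refine le_trans (Finset.sum_le_sum hinner) ?_
  rw [Finset.sum_const, Finset.card_range, nsmul_eq_mul]
  push_cast
  exact le_rfl

lemma sum_s_split (s : ℕ → ℝ) (hs0 : ∀ n, 0 ≤ s n) (hsum : Summable s) (R k : ℕ)
    (F : Finset ℕ) (T : ℕ → ℝ)
    (hT : ∀ i ∈ F, ∃ N, |T i| ≤ s N ∧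
      (i ≤ N + R ∧ N ≤ i ∨ k - i ≤ N + R ∧ N ≤ k - i))
    (hFk : ∀ i ∈ F, i ≤ k) :
    ∑ i ∈ F, |T i| ≤ 2 * ((R : ℝ) + 1) * ∑' n, s n := by
  classical
  choose! N hN1 hN2 using hT
  have step1 : ∑ i ∈ F, |T i| ≤ ∑ i ∈ F, s (N i) := Finset.sum_le_sum hN1
  have hsplit := Finset.sum_filter_add_sum_filter_not F
    (fun i => i ≤ N i + R ∧ N i ≤ i) (fun i => s (N i))
  have h1 : ∑ i ∈ F.filter (fun i => i ≤ N i + R ∧ N i ≤ i), s (N i)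
      ≤ ((R : ℝ) + 1) * ∑' n, s n := by
    apply sum_s_le s hs0 hsum R _ N id (Set.injOn_id _)
    intro i hi
    exact (Finset.mem_filter.mp hi).2
  have h2 : ∑ i ∈ F.filter (fun i => ¬(i ≤ N i + R ∧ N i ≤ i)), s (N i)
      ≤ ((R : ℝ) + 1) * ∑' n, s n := by
    apply sum_s_le s hs0 hsum R _ N (fun i => k - i)
    · intro x hx y hy hxy
      have hxF := (Finset.mem_filter.mp (Finset.mem_coe.mp hx)).1
      have hyF := (Finset.mem_filter.mp (Finset.mem_coe.mp hy)).1
      have hx2 := hFk x hxF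
      have hy2 := hFk y hyF
      have hxy' : k - x = k - y := hxy
      omega
    · intro i hi
      have hm := Finset.mem_filter.mp hi
      rcases hN2 i hm.1 with hc | hc
      · exact absurd hc hm.2
      · exact hc
  have htsum : 0 ≤ ∑' n, s n := tsum_nonneg hs0
  nlinarith [step1, hsplit, h1, h2]

end Aux4
/-- Proposition 4.3 (3): if `v₁uv₂` is reduced then both
`ζ(u, u⁻¹v₁⁻¹, v₁uv₂) − ζ(u, u⁻¹, u)` and `ζ(u⁻¹, v₁⁻¹, v₁uv₂) − ζ(u⁻¹, 1, u)` are
uniformly bounded. -/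
theorem zeta_continuity_bounded {α : Type} [Fintype α] [DecidableEq α]
    (hab : ∃ a b : α, a ≠ b) (dec : Decomp α)
    (φ : FreeGroup α → ℝ) (ω : FreeGroup α → FreeGroup α → ℝ)
    (hφ : IsDecomposable dec φ)
    (hω : ∃ ψ : FreeGroup α → ℝ, IsSymmetricMap ψ ∧ IsQuasimorphism ψ ∧
      ω = fun g h => d1 ψ g h)
    (hωbd : ∃ C : ℝ, ∀ g h, |ω g h| ≤ C)
    (hωc : DeltaContinuousCocycle dec.D ω) :
    ∃ C > (0 : ℝ), ∀ u v₁ v₂ : FreeGroup α, ReducedProd [v₁, u, v₂] →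
      |zetaD dec.D φ ω u (u⁻¹ * v₁⁻¹) (v₁ * u * v₂) - zetaD dec.D φ ω u u⁻¹ u| ≤ C ∧
      |zetaD dec.D φ ω u⁻¹ v₁⁻¹ (v₁ * u * v₂) - zetaD dec.D φ ω u⁻¹ 1 u| ≤ C := by
  classical
  obtain ⟨lam, ⟨B, hB⟩, hlamsym, hphi⟩ := hφ
  obtain ⟨Cw, hCw⟩ := hωbd
  obtain ⟨s, hs0, hsum, hcont⟩ := hωc
  have hB' : ∀ p ∈ dec.pieces, |lam p| ≤ max B 0 := fun p hp =>
    (hB p hp).trans (le_max_left _ _)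
  have hB'0 : (0:ℝ) ≤ max B 0 := le_max_right _ _
  have hCw' : ∀ g h, |ω g h| ≤ max Cw 0 := fun g h => (hCw g h).trans (le_max_left _ _)
  have hCw0 : (0:ℝ) ≤ max Cw 0 := le_max_right _ _
  have hts : (0:ℝ) ≤ ∑' n, s n := tsum_nonneg hs0
  refine ⟨max B 0 * ((2*(dec.R:ℝ)) * (2*max Cw 0) + 2*((dec.R:ℝ)+1) * ∑' n, s n) + 1,
    by positivity, ?_⟩
  intro u v₁ v₂ hred
  by_cases hnt : v₁ = 1 ∧ v₂ = 1
  · obtain ⟨rfl, rfl⟩ := hnt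
    simp only [inv_one, mul_one, one_mul]
    constructor <;> · rw [sub_self, abs_zero]; positivity
  -- reduced-product facts
  have hredw : wlen (v₁ * (u * v₂)) = wlen v₁ + (wlen u + wlen v₂) := by
    unfold ReducedProd at hred
    simpa [wlen] using hred
  obtain ⟨hv1u, huv2, hv1uv2, hv1uv2'⟩ := red2_triple hredw
  -- the comparison function
  set E : ℕ → ℝ := fun i => ω (((dec.D u).take i).prod⁻¹ * v₁⁻¹) (v₁ * u * v₂)
      - ω (((dec.D u).take i).prod⁻¹) u with hE
  -- bound on the sum of |E i|
  have hEsum : ∑ i ∈ Finset.range ((dec.D u).length + 1), |E i|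
      ≤ (2*(dec.R:ℝ)) * (2*max Cw 0) + 2*((dec.R:ℝ)+1) * ∑' n, s n := by
    have hsplit := Finset.sum_filter_add_sum_filter_not (Finset.range ((dec.D u).length + 1))
      (fun i => dec.R ≤ i ∧ i + dec.R ≤ (dec.D u).length) (fun i => |E i|)
    have hmid : ∑ i ∈ (Finset.range ((dec.D u).length + 1)).filter
          (fun i => dec.R ≤ i ∧ i + dec.R ≤ (dec.D u).length), |E i|
        ≤ 2 * ((dec.R:ℝ)+1) * ∑' n, s n := by
      apply sum_s_split s hs0 hsum dec.R (dec.D u).length _ E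
      · intro i hi
        rw [Finset.mem_filter] at hi
        obtain ⟨hne, N, hNe, hNb⟩ := dec.key hv1u huv2 hv1uv2 hi.2.1 hi.2.2 hnt
        refine ⟨N, ?_, hNb⟩
        have := hcont _ _ hne N hNe
        simpa [hE] using this
      · intro i hi
        rw [Finset.mem_filter] at hi
        exact (by omega : i ≤ (dec.D u).length) -- from hi.2.2 and R_pos
    have hedge : ∑ i ∈ (Finset.range ((dec.D u).length + 1)).filter
          (fun i => ¬(dec.R ≤ i ∧ i + dec.R ≤ (dec.D u).length)), |E i|
        ≤ (2*(dec.R:ℝ)) * (2*max Cw 0) := by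
      have hterm : ∀ i ∈ (Finset.range ((dec.D u).length + 1)).filter
          (fun i => ¬(dec.R ≤ i ∧ i + dec.R ≤ (dec.D u).length)), |E i| ≤ 2*max Cw 0 := by
        intro i _
        rw [hE]
        simp only []
        rw [sub_eq_add_neg]
        refine (abs_add_le _ _).trans ?_
        rw [abs_neg]
        have h1 := hCw' (((dec.D u).take i).prod⁻¹ * v₁⁻¹) (v₁ * u * v₂)
        have h2 := hCw' (((dec.D u).take i).prod⁻¹) u
        linarith
      have hsub : (Finset.range ((dec.D u).length + 1)).filter
            (fun i => ¬(dec.R ≤ i ∧ i + dec.R ≤ (dec.D u).length))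
          ⊆ Finset.range dec.R ∪ (Finset.range dec.R).image
              (fun d => (dec.D u).length - d) := by
        intro i hi
        rw [Finset.mem_filter, Finset.mem_range] at hi
        rw [Finset.mem_union, Finset.mem_range, Finset.mem_image]
        by_cases hiR : i < dec.R
        · exact Or.inl hiR
        · refine Or.inr ⟨(dec.D u).length - i, ?_, by omega⟩
          rw [Finset.mem_range]
          omega
      have hcard : ((Finset.range ((dec.D u).length + 1)).filter
            (fun i => ¬(dec.R ≤ i ∧ i + dec.R ≤ (dec.D u).length))).card ≤ 2 * dec.R := by
        refine (Finset.card_le_card hsub).trans ((Finset.card_union_le _ _).trans ?_)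
        have h1 := Finset.card_image_le (s := Finset.range dec.R)
          (f := fun d => (dec.D u).length - d)
        rw [Finset.card_range] at h1 ⊢
        omega
      calc ∑ i ∈ (Finset.range ((dec.D u).length + 1)).filter
              (fun i => ¬(dec.R ≤ i ∧ i + dec.R ≤ (dec.D u).length)), |E i|
          ≤ ((Finset.range ((dec.D u).length + 1)).filter
              (fun i => ¬(dec.R ≤ i ∧ i + dec.R ≤ (dec.D u).length))).card • (2*max Cw 0) :=
            Finset.sum_le_card_nsmul _ _ _ hterm
        _ ≤ (2*(dec.R:ℝ)) * (2*max Cw 0) := by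
            rw [nsmul_eq_mul]
            apply mul_le_mul_of_nonneg_right ?_ (by positivity)
            exact_mod_cast hcard
    linarith
  -- φ-coefficient bound
  have hphibd : ∀ (g : FreeGroup α) (j : ℕ), j < (dec.D g).length →
      |φ ((dec.D g).getD j 1)| ≤ max B 0 := by
    intro g j hj
    rw [hphi]
    exact phi_piece_bound dec lam hB' g hj
  -- identities for the zeta sums
  have hds : ∀ j : ℕ, ((dec.D u).take j).prod * ((dec.D u).drop j).prod = u := by
    intro j
    rw [← List.prod_append, List.take_append_drop]; exact dec.prod_eq u
  have hzeta1 : zetaD dec.D φ ω u (u⁻¹ * v₁⁻¹) (v₁ * u * v₂) - zetaD dec.D φ ω u u⁻¹ u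
      = ∑ j ∈ Finset.range (dec.D u).length, φ ((dec.D u).getD j 1) * E (j+1) := by
    unfold zetaD
    rw [zetaL_eq_sum, zetaL_eq_sum, ← Finset.sum_sub_distrib]
    apply Finset.sum_congr rfl
    intro j _
    have e1 : ∀ a b : FreeGroup α, a * b = u → b * (u⁻¹ * v₁⁻¹) = a⁻¹ * v₁⁻¹ := by
      intro a b hab2
      rw [← hab2]; group
    have e2 : ∀ a b : FreeGroup α, a * b = u → b * u⁻¹ = a⁻¹ := by
      intro a b hab2
      rw [← hab2]; group
    rw [e1 _ _ (hds (j+1)), e2 _ _ (hds (j+1))]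
    simp only [hE]
    ring
  have hlen' : (dec.D u⁻¹).length = (dec.D u).length := by
    rw [dec.inv_eq, length_seqInv]
  have hzeta2 : zetaD dec.D φ ω u⁻¹ v₁⁻¹ (v₁ * u * v₂) - zetaD dec.D φ ω u⁻¹ 1 u
      = ∑ j ∈ Finset.range (dec.D u).length,
          φ ((dec.D u⁻¹).getD j 1) * E ((dec.D u).length - 1 - j) := by
    unfold zetaD
    rw [zetaL_eq_sum, zetaL_eq_sum, ← Finset.sum_sub_distrib, hlen']
    apply Finset.sum_congr rfl
    intro j hj
    rw [Finset.mem_range] at hj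
    have hprod1 : ((dec.D u⁻¹).drop (j+1)).prod
        = ((dec.D u).take ((dec.D u).length - 1 - j)).prod⁻¹ := by
      rw [dec.inv_eq, seqInv_drop (by omega), prod_seqInv,
        show (dec.D u).length - (j+1) = (dec.D u).length - 1 - j from by omega]
    rw [hprod1, mul_one]
    simp only [hE]
    ring
  have habs : ∀ i : ℕ, |E i| ≤ |E i| := fun _ => le_rfl
  have hEsum' : ∑ j ∈ Finset.range (dec.D u).length, |E (j+1)|
      ≤ ∑ i ∈ Finset.range ((dec.D u).length + 1), |E i| := by
    rw [Finset.sum_range_succ' (fun i => |E i|) (dec.D u).length]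
    have := abs_nonneg (E 0)
    linarith
  have hEsum'' : ∑ j ∈ Finset.range (dec.D u).length, |E ((dec.D u).length - 1 - j)|
      ≤ ∑ i ∈ Finset.range ((dec.D u).length + 1), |E i| := by
    rw [Finset.sum_range_reflect (fun i => |E i|) (dec.D u).length]
    rw [Finset.sum_range_succ (fun i => |E i|) (dec.D u).length]
    have := abs_nonneg (E (dec.D u).length)
    linarith
  constructor
  · rw [hzeta1]
    calc |∑ j ∈ Finset.range (dec.D u).length, φ ((dec.D u).getD j 1) * E (j+1)|
        ≤ ∑ j ∈ Finset.range (dec.D u).length, |φ ((dec.D u).getD j 1) * E (j+1)| :=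
          Finset.abs_sum_le_sum_abs _ _
      _ ≤ ∑ j ∈ Finset.range (dec.D u).length, max B 0 * |E (j+1)| := by
          refine Finset.sum_le_sum fun j hj => ?_
          rw [abs_mul]
          exact mul_le_mul_of_nonneg_right (hphibd u j (Finset.mem_range.mp hj))
            (abs_nonneg _)
      _ = max B 0 * ∑ j ∈ Finset.range (dec.D u).length, |E (j+1)| := by
          rw [Finset.mul_sum]
      _ ≤ max B 0 * ((2*(dec.R:ℝ)) * (2*max Cw 0) + 2*((dec.R:ℝ)+1) * ∑' n, s n) := by
          apply mul_le_mul_of_nonneg_left (hEsum'.trans hEsum) hB'0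
      _ ≤ max B 0 * ((2*(dec.R:ℝ)) * (2*max Cw 0) + 2*((dec.R:ℝ)+1) * ∑' n, s n) + 1 := by
          linarith
  · rw [hzeta2]
    calc |∑ j ∈ Finset.range (dec.D u).length,
            φ ((dec.D u⁻¹).getD j 1) * E ((dec.D u).length - 1 - j)|
        ≤ ∑ j ∈ Finset.range (dec.D u).length,
            |φ ((dec.D u⁻¹).getD j 1) * E ((dec.D u).length - 1 - j)| :=
          Finset.abs_sum_le_sum_abs _ _
      _ ≤ ∑ j ∈ Finset.range (dec.D u).length, max B 0 * |E ((dec.D u).length - 1 - j)| := by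
          refine Finset.sum_le_sum fun j hj => ?_
          rw [abs_mul]
          refine mul_le_mul_of_nonneg_right (hphibd u⁻¹ j ?_) (abs_nonneg _)
          rw [hlen']
          exact Finset.mem_range.mp hj
      _ = max B 0 * ∑ j ∈ Finset.range (dec.D u).length, |E ((dec.D u).length - 1 - j)| := by
          rw [Finset.mul_sum]
      _ ≤ max B 0 * ((2*(dec.R:ℝ)) * (2*max Cw 0) + 2*((dec.R:ℝ)+1) * ∑' n, s n) := by
          apply mul_le_mul_of_nonneg_left (hEsum''.trans hEsum) hB'0
      _ ≤ max B 0 * ((2*(dec.R:ℝ)) * (2*max Cw 0) + 2*((dec.R:ℝ)+1) * ∑' n, s n) + 1 := by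
          linarith
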